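/- Let G be a connected graph and H be obtained from G by attaching a pendant u to a basis forced vertex v of G. Then the metric bases of G and H coincide up to possibly exchanging v and u; in particular every metric basis of H is either a metric basis of G or obtained from one by replacing v with u. -/

import Mathlib

open SimpleGraph

def isResolving {V : Type*} (G : SimpleGraph V) (S : Set V) : Prop :=
  ∀ x y : V, x ≠ y → ∃ s ∈ S, G.dist s x ≠ G.dist s y

noncomputable def metricDim {V : Type*} (G : SimpleGraph V) : ℕ :=
  sInf {n | ∃ S : Set V, isResolving G S ∧ S.ncard = n}

def isMetricBasis {V : Type*} (G : SimpleGraph V) (S : Set V) : Prop :=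
  isResolving G S ∧ S.ncard = metricDim G

def isBasisForced {V : Type*} (G : SimpleGraph V) (v : V) : Prop :=
  ∀ S : Set V, isMetricBasis G S → v ∈ S

def attachPendant {V : Type*} (G : SimpleGraph V) (v : V) : SimpleGraph (Option V) :=
  SimpleGraph.fromRel (fun x y =>
    (∃ a b, x = some a ∧ y = some b ∧ G.Adj a b) ∨ (x = some v ∧ y = none))

section Aux

variable {V : Type*} {G : SimpleGraph V} {v : V}

lemma adj_some_some {a b : V} :
    (attachPendant G v).Adj (some a) (some b) ↔ G.Adj a b := by
  constructor
  · rintro ⟨hne, (⟨a', b', h1, h2, hab⟩ | ⟨h1, h2⟩) | (⟨a', b', h1, h2, hab⟩ | ⟨h1, h2⟩)⟩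
    · cases h1; cases h2; exact hab
    · exact absurd h2 (by simp)
    · cases h1; cases h2; exact hab.symm
    · exact absurd h2 (by simp)
  · intro h
    exact ⟨by simpa using h.ne, Or.inl (Or.inl ⟨a, b, rfl, rfl, h⟩)⟩

lemma adj_none {x : Option V} :
    (attachPendant G v).Adj x none ↔ x = some v := by
  constructor
  · rintro ⟨hne, (⟨a', b', h1, h2, hab⟩ | ⟨h1, h2⟩) | (⟨a', b', h1, h2, hab⟩ | ⟨h1, h2⟩)⟩
    · exact absurd h2 (by simp)
    · exact h1
    · exact absurd h1 (by simp)
    · exact absurd h1 (by simp)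
  · rintro rfl
    exact ⟨by simp, Or.inl (Or.inr ⟨rfl, rfl⟩)⟩

/-- The natural homomorphism `G →g attachPendant G v`. -/
def pendHom (G : SimpleGraph V) (v : V) : G →g attachPendant G v where
  toFun := some
  map_rel' := fun h => adj_some_some.mpr h

lemma pendHom_apply (a : V) : pendHom G v a = some a := rfl

noncomputable def pdist (G : SimpleGraph V) (v : V) : Option V → Option V → ℕ
  | some a, some b => G.dist a b
  | some a, none => G.dist a v + 1
  | none, some b => G.dist v b + 1
  | none, none => 0

lemma walk_lb (hG : G.Connected) {x y : Option V}
    (w : (attachPendant G v).Walk x y) :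
    pdist G v x y ≤ w.length := by
  induction w with
  | @nil u =>
    cases u with
    | none => simp [pdist]
    | some a => simp [pdist, SimpleGraph.dist_self]
  | @cons x z y h w ih =>
    simp only [Walk.length_cons]
    cases x with
    | none =>
      cases z with
      | none => exact absurd h (attachPendant G v).irrefl
      | some c =>
        have hc : c = v := by simpa using adj_none.mp h.symm
        subst hc
        cases y with
        | none => simp [pdist]
        | some b => simp only [pdist] at ih ⊢; omega
    | some a =>
      cases z with
      | none =>
        have ha : a = v := by simpa using adj_none.mp h
        cases y with
        | none =>
          simp only [pdist, ha, SimpleGraph.dist_self]; omega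
        | some b => simp only [pdist, ha] at ih ⊢; omega
      | some c =>
        have hac : G.Adj a c := adj_some_some.mp h
        have h1 : G.dist a c = 1 := dist_eq_one_iff_adj.mpr hac
        cases y with
        | none =>
          have h2 : G.dist a v ≤ G.dist a c + G.dist c v := hG.dist_triangle
          simp only [pdist] at ih ⊢; omega
        | some b =>
          have h2 : G.dist a b ≤ G.dist a c + G.dist c b := hG.dist_triangle
          simp only [pdist] at ih ⊢; omega

lemma dist_some_some (hG : G.Connected) (a b : V) :
    (attachPendant G v).dist (some a) (some b) = G.dist a b := by
  obtain ⟨p, hp⟩ := hG.exists_walk_length_eq_dist a b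
  have hub : (attachPendant G v).dist (some a) (some b) ≤ G.dist a b := by
    have := SimpleGraph.dist_le (p.map (pendHom G v))
    rw [Walk.length_map, hp] at this
    simpa [pendHom_apply] using this
  have hreach : (attachPendant G v).Reachable (some a) (some b) := ⟨p.map (pendHom G v)⟩
  obtain ⟨q, hq⟩ := hreach.exists_walk_length_eq_dist
  have hlb := walk_lb hG q
  simp only [pdist] at hlb
  omega

lemma dist_some_none (hG : G.Connected) (a : V) :
    (attachPendant G v).dist (some a) none = G.dist a v + 1 := by
  obtain ⟨p, hp⟩ := hG.exists_walk_length_eq_dist a v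
  have hadj : (attachPendant G v).Adj (some v) none := adj_none.mpr rfl
  have hub : (attachPendant G v).dist (some a) none ≤ G.dist a v + 1 := by
    have := SimpleGraph.dist_le ((p.map (pendHom G v)).concat hadj)
    have hl := Walk.length_concat (p.map (pendHom G v)) hadj
    rw [Walk.length_map, hp] at hl
    exact le_trans this hl.le
  have hreach : (attachPendant G v).Reachable (some a) none :=
    ⟨(p.map (pendHom G v)).concat hadj⟩
  obtain ⟨q, hq⟩ := hreach.exists_walk_length_eq_dist
  have hlb := walk_lb hG q
  simp only [pdist] at hlb
  omega

lemma dist_none_some (hG : G.Connected) (a : V) :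
    (attachPendant G v).dist none (some a) = G.dist v a + 1 := by
  rw [SimpleGraph.dist_comm, dist_some_none hG, G.dist_comm]

lemma resolving_univ (hG : G.Connected) : isResolving G Set.univ := by
  intro x y hxy
  refine ⟨x, trivial, ?_⟩
  rw [SimpleGraph.dist_self]
  exact fun h => (hG.pos_dist_of_ne hxy).ne h

lemma metricDim_le {S : Set V} (h : isResolving G S) : metricDim G ≤ S.ncard :=
  Nat.sInf_le ⟨S, h, rfl⟩

lemma exists_metricBasis [Fintype V] (hG : G.Connected) :
    ∃ R : Set V, isMetricBasis G R := by
  have hne : {n | ∃ S : Set V, isResolving G S ∧ S.ncard = n}.Nonempty :=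
    ⟨(Set.univ : Set V).ncard, Set.univ, resolving_univ hG, rfl⟩
  obtain ⟨S, hS, hc⟩ := Nat.sInf_mem hne
  exact ⟨S, hS, hc⟩

lemma proj_resolving (hG : G.Connected) {S : Set (Option V)}
    (hS : isResolving (attachPendant G v) S) :
    isResolving G ((fun o : Option V => o.getD v) '' S) := by
  intro x y hxy
  obtain ⟨s, hsS, hd⟩ := hS (some x) (some y) (by simpa using hxy)
  cases s with
  | none =>
    refine ⟨v, ⟨none, hsS, rfl⟩, ?_⟩
    rw [dist_none_some hG, dist_none_some hG] at hd
    omega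
  | some a =>
    refine ⟨a, ⟨some a, hsS, rfl⟩, ?_⟩
    rwa [dist_some_some hG, dist_some_some hG] at hd

lemma insert_resolving (hG : G.Connected) {R : Set V}
    (hR : isResolving G R) (hvR : v ∈ R) :
    isResolving (attachPendant G v) (insert none (some '' (R \ {v}))) := by
  intro x y hxy
  cases x with
  | none =>
    cases y with
    | none => exact absurd rfl hxy
    | some b =>
      refine ⟨none, Set.mem_insert _ _, ?_⟩
      rw [SimpleGraph.dist_self, dist_none_some hG]
      omega
  | some a =>
    cases y with
    | none =>
      refine ⟨none, Set.mem_insert _ _, ?_⟩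
      rw [SimpleGraph.dist_self, dist_none_some hG]
      omega
    | some b =>
      have hab : a ≠ b := by simpa using hxy
      obtain ⟨s, hs, hd⟩ := hR a b hab
      by_cases hsv : s = v
      · subst hsv
        refine ⟨none, Set.mem_insert _ _, ?_⟩
        rw [dist_none_some hG, dist_none_some hG]
        omega
      · refine ⟨some s, Set.mem_insert_of_mem _ ⟨s, ⟨hs, hsv⟩, rfl⟩, ?_⟩
        rwa [dist_some_some hG, dist_some_some hG]

end Aux

theorem stmt4 {V : Type*} [Fintype V] (G : SimpleGraph V) (hG : G.Connected)
    (v : V) (hv : isBasisForced G v)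
    (S : Set (Option V)) (hS : isMetricBasis (attachPendant G v) S) :
    (∃ R : Set V, isMetricBasis G R ∧ S = some '' R) ∨
    (∃ R : Set V, isMetricBasis G R ∧ v ∈ R ∧
      S = insert (none : Option V) (some '' (R \ {v}))) := by
  classical
  obtain ⟨hSres, hScard⟩ := hS
  -- metricDim H ≤ metricDim G via a basis of G
  obtain ⟨R₀, hR₀⟩ := exists_metricBasis hG
  have hvR₀ : v ∈ R₀ := hv R₀ hR₀
  have hnone_nmem : (none : Option V) ∉ some '' (R₀ \ {v}) := by simp
  have hicard : (insert (none : Option V) (some '' (R₀ \ {v}))).ncard = R₀.ncard := by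
    rw [Set.ncard_insert_of_notMem hnone_nmem (Set.toFinite _),
      Set.ncard_image_of_injective _ (Option.some_injective V),
      Set.ncard_diff_singleton_add_one hvR₀ (Set.toFinite _)]
  have hUB : metricDim (attachPendant G v) ≤ metricDim G := by
    have := metricDim_le (insert_resolving hG hR₀.1 hvR₀)
    rw [hicard, hR₀.2] at this
    exact this
  -- the projection of S
  set f : Option V → V := fun o => o.getD v with hf
  set R : Set V := f '' S with hR
  have hRres : isResolving G R := proj_resolving hG hSres
  have hG_le : metricDim G ≤ R.ncard := metricDim_le hRres
  have hcard_le : R.ncard ≤ S.ncard := Set.ncard_image_le (Set.toFinite _)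
  have hRcard : R.ncard = metricDim G := by omega
  have hRbasis : isMetricBasis G R := ⟨hRres, hRcard⟩
  by_cases hn : (none : Option V) ∈ S
  · -- some v cannot also be in S
    have hsv : some v ∉ S := by
      intro hsvS
      have himg : R = f '' (S \ {some v}) := by
        apply subset_antisymm
        · rintro x ⟨s, hsS, rfl⟩
          by_cases h : s = some v
          · subst h
            exact ⟨none, ⟨hn, by simp⟩, rfl⟩
          · exact ⟨s, ⟨hsS, h⟩, rfl⟩
        · rintro x ⟨s, ⟨hsS, _⟩, rfl⟩
          exact ⟨s, hsS, rfl⟩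
      have h1 : R.ncard ≤ (S \ {some v}).ncard := by
        rw [himg]; exact Set.ncard_image_le (Set.toFinite _)
      have h2 : (S \ {some v}).ncard < S.ncard :=
        Set.ncard_diff_singleton_lt_of_mem hsvS (Set.toFinite _)
      omega
    right
    refine ⟨R, hRbasis, ⟨none, hn, rfl⟩, ?_⟩
    ext x
    cases x with
    | none => simp [hn]
    | some a =>
      simp only [Set.mem_insert_iff, reduceCtorEq, false_or, Set.mem_image,
        Set.mem_diff, Set.mem_singleton_iff, Option.some_inj]
      constructor
      · intro haS
        refine ⟨a, ⟨⟨some a, haS, rfl⟩, ?_⟩, rfl⟩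
        rintro rfl; exact hsv haS
      · rintro ⟨a', ⟨⟨s, hsS, hfs⟩, hav⟩, rfl⟩
        cases s with
        | none => exact absurd hfs.symm hav
        | some a'' => cases hfs; exact hsS
  · left
    refine ⟨R, hRbasis, ?_⟩
    ext x
    cases x with
    | none =>
      simp only [hn, Set.mem_image, false_iff]
      rintro ⟨a, _, h⟩; cases h
    | some a =>
      simp only [Set.mem_image, Option.some_inj]
      constructor
      · intro haS
        exact ⟨a, ⟨some a, haS, rfl⟩, rfl⟩
      · rintro ⟨a', ⟨s, hsS, hfs⟩, rfl⟩
        cases s with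
        | none => exact absurd hsS hn
        | some a'' => cases hfs; exact hsS
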